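/- Let N ≥ 2 and let A = Σ_{j=1}^{⌊N/2⌋} a_{2j−1}E_{2j−1,2j} + Σ_{j=1}^{⌊(N−1)/2⌋} a_{2j}E_{2j+1,2j} ∈ Mat_N(ℝ) with a₁,…,a_{N−1} ∈ ℝ∖{0}. Let h be the monic Hermite polynomials and, for n ≥ 0, define the matrix polynomial Qₙ(x) = hₙ(x)·I + A·hₙ₊₁(x) − (n/2)·Aᵀ·hₙ₋₁(x) − hₙ(x)·A·x + (n/2)·hₙ₋₁(x)·AᵀA·x (for n = 0 the terms with factor n vanish). Then for all n ≥ 0 and all x: hₙ'(x)·((AᵀA/2)·x − (A+Aᵀ)/2) + hₙ(x)·I = Qₙ(x). That is, the sequence of matrix orthogonal polynomials Qₙ for the weight W(x) = (I+Ax)e^{−x²}(I+Ax)ᵀ is the image of the scalar Hermite polynomials under the first-order differential operator 𝒟₁ = ∂((AᵀA/2)x − (A+Aᵀ)/2) + I, exhibiting W as a Darboux transformation of the diagonal Hermite weight e^{−x²}·I. -/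

import Mathlib

open Matrix Polynomial MeasureTheory

noncomputable section

namespace HermAux

/-- Gaussian-weighted integral of a polynomial. -/
def Iw (p : Polynomial ℝ) : ℝ := ∫ x : ℝ, p.eval x * Real.exp (-x ^ 2)

lemma integrable_aux (p : Polynomial ℝ) :
    Integrable fun x : ℝ => p.eval x * Real.exp (-x ^ 2) := by
  have key : ∀ n : ℕ, Integrable fun x : ℝ => x ^ n * Real.exp (-x ^ 2) := by
    intro n
    have hlt : (-1 : ℝ) < (n : ℝ) := lt_of_lt_of_le (by norm_num) (Nat.cast_nonneg n)
    have h := integrable_rpow_mul_exp_neg_mul_sq (b := 1) one_pos hlt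
    simpa [Real.rpow_natCast] using h
  have hfe : (fun x : ℝ => p.eval x * Real.exp (-x ^ 2)) =
      fun x => ∑ i ∈ Finset.range (p.natDegree + 1),
        p.coeff i * (x ^ i * Real.exp (-x ^ 2)) := by
    funext x
    rw [Polynomial.eval_eq_sum_range, Finset.sum_mul]
    simp [mul_assoc]
  rw [hfe]
  exact integrable_finset_sum _ fun i _ => (key i).const_mul _

lemma Iw_add (p q : Polynomial ℝ) : Iw (p + q) = Iw p + Iw q := by
  unfold Iw
  simp only [eval_add, add_mul]
  exact integral_add (integrable_aux p) (integrable_aux q)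

lemma Iw_zero : Iw 0 = 0 := by simp [Iw]

lemma Iw_Cmul (c : ℝ) (p : Polynomial ℝ) : Iw (C c * p) = c * Iw p := by
  unfold Iw
  simp only [eval_mul, eval_C, mul_assoc]
  exact integral_const_mul c _

lemma Iw_sub (p q : Polynomial ℝ) : Iw (p - q) = Iw p - Iw q := by
  have := Iw_add (p - q) q
  simp only [sub_add_cancel] at this
  linarith

lemma Iw_derivative (p : Polynomial ℝ) : Iw (derivative p) = Iw (C 2 * X * p) := by
  have hderiv : ∀ x : ℝ, HasDerivAt (fun y => p.eval y * Real.exp (-y ^ 2))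
      (((derivative p : Polynomial ℝ) - C 2 * X * p).eval x * Real.exp (-x ^ 2)) x := by
    intro x
    have h1 : HasDerivAt (fun y : ℝ => -y ^ 2) (-(2 * x)) x := by
      simpa using (hasDerivAt_pow 2 x).fun_neg
    have h2 : HasDerivAt (fun y : ℝ => Real.exp (-y ^ 2))
        (Real.exp (-x ^ 2) * -(2 * x)) x := h1.exp
    have h3 := (p.hasDerivAt x).fun_mul h2
    refine h3.congr_deriv ?_
    simp only [eval_sub, eval_mul, eval_C, eval_X, Polynomial.deriv]
    ring
  have h0 := integral_eq_zero_of_hasDerivAt_of_integrable hderiv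
      (integrable_aux (derivative p - C 2 * X * p)) (integrable_aux p)
  have : Iw (derivative p - C 2 * X * p) = 0 := h0
  rw [Iw_sub] at this
  linarith

lemma Iw_sq_pos (p : Polynomial ℝ) (hp : p ≠ 0) : 0 < Iw (p * p) := by
  unfold Iw
  rw [integral_pos_iff_support_of_nonneg]
  · have hsupp : Function.support (fun x : ℝ => (p * p).eval x * Real.exp (-x ^ 2)) =
        {x : ℝ | p.IsRoot x}ᶜ := by
      ext x
      simp only [Function.mem_support, Set.mem_compl_iff, Set.mem_setOf_eq,
        Polynomial.IsRoot, eval_mul]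
      constructor
      · intro hx hroot; exact hx (by rw [hroot]; ring)
      · intro hx
        exact mul_ne_zero (mul_ne_zero hx hx) (Real.exp_ne_zero _)
    rw [hsupp]
    have hfin : (volume : Measure ℝ) {x : ℝ | p.IsRoot x} = 0 :=
      (Polynomial.finite_setOf_isRoot hp).measure_zero _
    by_contra hne
    push_neg at hne
    have hzero : (volume : Measure ℝ) ({x : ℝ | p.IsRoot x}ᶜ) = 0 := le_antisymm hne bot_le
    have huniv := measure_univ_le_add_compl (μ := (volume : Measure ℝ))
        (s := {x : ℝ | p.IsRoot x})
    rw [hfin, hzero, add_zero] at huniv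
    simp [Real.volume_univ] at huniv
  · intro x
    simp only [eval_mul]
    exact mul_nonneg (mul_self_nonneg _) (Real.exp_pos _).le
  · exact integrable_aux _

lemma Iw_eq_zero_of_sq (p : Polynomial ℝ) (h : Iw (p * p) = 0) : p = 0 := by
  by_contra hp
  exact absurd h (Iw_sq_pos p hp).ne'

section Herm

variable (h : ℕ → Polynomial ℝ)
variable (hmonic : ∀ n, (h n).Monic) (hdeg : ∀ n, (h n).natDegree = n)
variable (horth : ∀ n m : ℕ, n ≠ m → Iw (h n * h m) = 0)

include hmonic hdeg in
lemma span_orth (q : Polynomial ℝ) (n : ℕ)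
    (hq : ∀ m, m < n → Iw (q * h m) = 0) :
    ∀ (k : ℕ) (p : Polynomial ℝ), p.natDegree ≤ k → p.degree < (n : WithBot ℕ) →
      Iw (q * p) = 0 := by
  intro k
  induction k with
  | zero =>
    intro p hpk hpd
    by_cases hp0 : p = 0
    · simp [hp0, Iw]
    · have hdz : p.natDegree = 0 := Nat.le_zero.mp hpk
      have hn : 0 < n := by
        have := (Polynomial.natDegree_lt_iff_degree_lt hp0).mpr hpd
        omega
      have h0 : h 0 = 1 := (hmonic 0).natDegree_eq_zero.mp (hdeg 0)
      have hpc : p = C (p.coeff 0) := Polynomial.eq_C_of_natDegree_eq_zero hdz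
      rw [hpc, show q * C (p.coeff 0) = C (p.coeff 0) * (q * h 0) by rw [h0]; ring,
        Iw_Cmul, hq 0 hn, mul_zero]
  | succ k ih =>
    intro p hpk hpd
    by_cases hp0 : p = 0
    · simp [hp0, Iw]
    · have hmn : p.natDegree < n := (Polynomial.natDegree_lt_iff_degree_lt hp0).mpr hpd
      set m := p.natDegree with hm
      set r := p - C p.leadingCoeff * h m with hr
      have hlc : p.leadingCoeff ≠ 0 := leadingCoeff_ne_zero.mpr hp0
      have hhm0 : h m ≠ 0 := (hmonic m).ne_zero
      have hsplit : q * p = C p.leadingCoeff * (q * h m) + q * r := by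
        rw [hr]; ring
      have key : Iw (q * p) = p.leadingCoeff * Iw (q * h m) + Iw (q * r) := by
        rw [hsplit, Iw_add, Iw_Cmul]
      rw [key, hq m hmn, mul_zero, zero_add]
      by_cases hr0 : r = 0
      · simp [hr0, Iw]
      · have hdegCm : (C p.leadingCoeff * h m).degree = p.degree := by
          rw [Polynomial.degree_C_mul hlc, Polynomial.degree_eq_natDegree hhm0,
            Polynomial.degree_eq_natDegree hp0, hdeg m]
        have hlcCm : (C p.leadingCoeff * h m).leadingCoeff = p.leadingCoeff := by
          rw [Polynomial.leadingCoeff_mul, Polynomial.leadingCoeff_C, (hmonic m).leadingCoeff,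
            mul_one]
        have hdr : r.degree < p.degree :=
          Polynomial.degree_sub_lt hdegCm.symm hp0 hlcCm.symm
        have hrk : r.natDegree ≤ k := by
          have := Polynomial.natDegree_lt_natDegree hr0 hdr
          omega
        exact ih r hrk (hdr.trans hpd)

include hmonic hdeg horth in
lemma horth_poly (n : ℕ) (p : Polynomial ℝ) (hp : p.degree < (n : WithBot ℕ)) :
    Iw (h n * p) = 0 :=
  span_orth h hmonic hdeg (h n) n (fun m hm => horth n m (by omega)) p.natDegree p le_rfl hp

include hmonic hdeg horth in
lemma deriv_h : ∀ n : ℕ, derivative (h n) = C (n : ℝ) * h (n - 1) := by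
  intro n
  rcases Nat.eq_zero_or_pos n with hn0 | hn1
  · subst hn0
    have h0 : h 0 = 1 := (hmonic 0).natDegree_eq_zero.mp (hdeg 0)
    simp [h0]
  · set d := derivative (h n) - C (n : ℝ) * h (n - 1) with hd
    by_cases hd0 : d = 0
    · have := sub_eq_zero.mp hd0
      exact this
    · exfalso
      -- degree d < n - 1
      have hdd : d.degree < ((n - 1 : ℕ) : WithBot ℕ) := by
        rw [Polynomial.degree_lt_iff_coeff_zero]
        intro m hm
        have hm' : n - 1 ≤ m := by exact_mod_cast hm
        rw [hd, Polynomial.coeff_sub, Polynomial.coeff_derivative, Polynomial.coeff_C_mul]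
        rcases eq_or_lt_of_le hm' with heq | hlt
        · subst heq
          have h1 : (h n).coeff (n - 1 + 1) = 1 := by
            have heq : n - 1 + 1 = n := by omega
            have hc := (hmonic n).coeff_natDegree
            rw [hdeg n] at hc
            rw [heq]; exact hc
          have h2 : (h (n - 1)).coeff (n - 1) = 1 := by
            have hc := (hmonic (n - 1)).coeff_natDegree
            rw [hdeg (n - 1)] at hc
            exact hc
          rw [h1, h2]
          have : ((n - 1 : ℕ) : ℝ) + 1 = (n : ℝ) := by
            have : ((n - 1 : ℕ) : ℝ) = (n : ℝ) - 1 := by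
              have hn1' : (1 : ℕ) ≤ n := hn1
              push_cast [Nat.cast_sub hn1']; ring
            rw [this]; ring
          rw [this]; ring
        · have h1 : (h n).coeff (m + 1) = 0 := by
            apply Polynomial.coeff_eq_zero_of_natDegree_lt
            rw [hdeg]; omega
          have h2 : (h (n - 1)).coeff m = 0 := by
            apply Polynomial.coeff_eq_zero_of_natDegree_lt
            rw [hdeg]; omega
          rw [h1, h2]; ring
      -- d is orthogonal to all polys of degree < n-1
      have horthd : ∀ p : Polynomial ℝ, p.degree < ((n - 1 : ℕ) : WithBot ℕ) →
          Iw (d * p) = 0 := by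
        intro p hp
        have hsplit : d * p = derivative (h n) * p - C (n : ℝ) * (h (n - 1) * p) := by
          rw [hd]; ring
        have hterm2 : Iw (h (n - 1) * p) = 0 := horth_poly h hmonic hdeg horth (n - 1) p hp
        have hterm1 : Iw (derivative (h n) * p) = 0 := by
          have hparts := Iw_derivative (h n * p)
          rw [Polynomial.derivative_mul, Iw_add] at hparts
          -- Iw (h n * (C 2 * X * p)) = 0 and Iw (h n * derivative p) = 0
          have hz1 : Iw (C 2 * X * (h n * p)) = 0 := by
            rw [show C (2:ℝ) * X * (h n * p) = h n * (C 2 * X * p) by ring]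
            apply horth_poly h hmonic hdeg horth
            by_cases hp0 : p = 0
            · simp only [hp0, mul_zero, Polynomial.degree_zero]
              exact WithBot.bot_lt_coe n
            · have hCX : (C (2:ℝ) * X) ≠ 0 := by
                intro hcx
                have := congrArg (fun q => Polynomial.coeff q 1) hcx
                simp at this
              have hXp : (C (2:ℝ) * X * p) ≠ 0 := mul_ne_zero hCX hp0
              rw [← Polynomial.natDegree_lt_iff_degree_lt hXp]
              have hnd : (C (2:ℝ) * X * p).natDegree = 1 + p.natDegree := by
                rw [Polynomial.natDegree_mul hCX hp0]
                simp
              have hpn : p.natDegree < n - 1 :=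
                (Polynomial.natDegree_lt_iff_degree_lt hp0).mpr hp
              omega
          have hz2 : Iw (h n * derivative p) = 0 := by
            apply horth_poly h hmonic hdeg horth
            by_cases hdp0 : derivative p = 0
            · simp only [hdp0, Polynomial.degree_zero]
              exact WithBot.bot_lt_coe n
            · rw [← Polynomial.natDegree_lt_iff_degree_lt hdp0]
              have := Polynomial.natDegree_derivative_le p
              have hp0 : p ≠ 0 := by
                intro hh; rw [hh] at hdp0; simp at hdp0
              have hpn : p.natDegree < n - 1 :=
                (Polynomial.natDegree_lt_iff_degree_lt hp0).mpr hp
              omega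
          rw [hz1] at hparts
          linarith
        rw [hsplit, Iw_sub, Iw_Cmul, hterm1, hterm2]
        ring
      have : Iw (d * d) = 0 := horthd d hdd
      exact hd0 (Iw_eq_zero_of_sq d this)

include hmonic hdeg horth in
lemma Iw_Xnn (n : ℕ) : Iw (X * h n * h n) = 0 := by
  have hparts := Iw_derivative (h n * h n)
  have hder : derivative (h n * h n) = C (2 * (n : ℝ)) * (h (n - 1) * h n) := by
    rw [Polynomial.derivative_mul, deriv_h h hmonic hdeg horth n, Polynomial.C_mul]
    have c2 : (Polynomial.C (2 : ℝ)) = (2 : Polynomial ℝ) := map_ofNat C 2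
    rw [c2]; ring
  rw [hder, Iw_Cmul] at hparts
  have hz : 2 * (n : ℝ) * Iw (h (n - 1) * h n) = 0 := by
    rcases Nat.eq_zero_or_pos n with h0 | h1
    · subst h0; simp
    · rw [horth (n - 1) n (by omega), mul_zero]
  rw [hz] at hparts
  rw [show C (2 : ℝ) * X * (h n * h n) = C 2 * (X * h n * h n) by ring, Iw_Cmul] at hparts
  linarith

include hmonic hdeg horth in
lemma Iw_Xn_nsub1 (n : ℕ) (hn : 1 ≤ n) :
    Iw (X * h n * h (n - 1)) = (n : ℝ) / 2 * Iw (h (n - 1) * h (n - 1)) := by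
  have hparts := Iw_derivative (h n * h (n - 1))
  rw [Polynomial.derivative_mul, deriv_h h hmonic hdeg horth n,
    deriv_h h hmonic hdeg horth (n - 1), Iw_add] at hparts
  have e1 : Iw (C (n : ℝ) * h (n - 1) * h (n - 1)) = (n : ℝ) * Iw (h (n - 1) * h (n - 1)) := by
    rw [show C (n : ℝ) * h (n - 1) * h (n - 1) = C (n : ℝ) * (h (n - 1) * h (n - 1)) by ring,
      Iw_Cmul]
  have e2 : Iw (h n * (C ((n - 1 : ℕ) : ℝ) * h (n - 1 - 1))) = 0 := by
    rw [show h n * (C ((n - 1 : ℕ) : ℝ) * h (n - 1 - 1))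
        = C ((n - 1 : ℕ) : ℝ) * (h n * h (n - 1 - 1)) by ring, Iw_Cmul]
    rcases eq_or_lt_of_le hn with h1 | h2
    · rw [← h1]; norm_num
    · rw [horth n (n - 1 - 1) (by omega), mul_zero]
  rw [e1, e2,
    show C (2 : ℝ) * X * (h n * h (n - 1)) = C 2 * (X * h n * h (n - 1)) by ring,
    Iw_Cmul] at hparts
  linarith

include hmonic hdeg horth in
lemma recur (n : ℕ) :
    (X : Polynomial ℝ) * h n = h (n + 1) + C ((n : ℝ) / 2) * h (n - 1) := by
  set r := X * h n - h (n + 1) - C ((n : ℝ) / 2) * h (n - 1) with hr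
  have hs : r = 0 := by
    apply Iw_eq_zero_of_sq
    have hXn : (X : Polynomial ℝ) * h n ≠ 0 := mul_ne_zero X_ne_zero (hmonic n).ne_zero
    have hdr : r.degree < ((n + 1 : ℕ) : WithBot ℕ) := by
      have hd1 : ((X : Polynomial ℝ) * h n).degree = ((n + 1 : ℕ) : WithBot ℕ) := by
        rw [Polynomial.degree_mul, Polynomial.degree_X,
          Polynomial.degree_eq_natDegree (hmonic n).ne_zero, hdeg]
        norm_cast
        omega
      have hd2 : (h (n + 1)).degree = ((n + 1 : ℕ) : WithBot ℕ) := by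
        rw [Polynomial.degree_eq_natDegree (hmonic (n + 1)).ne_zero, hdeg]
      have hsub1 : ((X : Polynomial ℝ) * h n - h (n + 1)).degree < ((n + 1 : ℕ) : WithBot ℕ) := by
        have hlc : ((X : Polynomial ℝ) * h n).leadingCoeff = (h (n + 1)).leadingCoeff := by
          rw [(Polynomial.monic_X.mul (hmonic n)).leadingCoeff, (hmonic (n + 1)).leadingCoeff]
        have := Polynomial.degree_sub_lt (hd1.trans hd2.symm) hXn hlc
        rwa [hd1] at this
      have hsub2 : (C ((n : ℝ) / 2) * h (n - 1)).degree < ((n + 1 : ℕ) : WithBot ℕ) := by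
        rcases eq_or_ne ((n : ℝ) / 2) 0 with hc | hc
        · simp only [hc, map_zero, zero_mul, Polynomial.degree_zero]
          exact WithBot.bot_lt_coe _
        · rw [Polynomial.degree_C_mul hc,
            Polynomial.degree_eq_natDegree (hmonic (n - 1)).ne_zero, hdeg]
          exact_mod_cast by omega
      calc r.degree ≤ max ((X : Polynomial ℝ) * h n - h (n + 1)).degree
            (C ((n : ℝ) / 2) * h (n - 1)).degree := Polynomial.degree_sub_le _ _
        _ < ((n + 1 : ℕ) : WithBot ℕ) := max_lt hsub1 hsub2
    have hq : ∀ m, m < n + 1 → Iw (r * h m) = 0 := by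
      intro m hm
      have hsplit : r * h m = X * h n * h m - h (n + 1) * h m
          - C ((n : ℝ) / 2) * (h (n - 1) * h m) := by rw [hr]; ring
      rw [hsplit, Iw_sub, Iw_sub, Iw_Cmul, horth (n + 1) m (by omega)]
      rcases eq_or_lt_of_le (Nat.lt_succ_iff.mp hm) with heq | hlt
      · subst heq
        rw [Iw_Xnn h hmonic hdeg horth m]
        have hz : (m : ℝ) / 2 * Iw (h (m - 1) * h m) = 0 := by
          rcases Nat.eq_zero_or_pos m with h0 | h1
          · subst h0; norm_num
          · rw [horth (m - 1) m (by omega), mul_zero]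
        rw [hz]; ring
      · by_cases hm1 : m = n - 1
        · have hn1 : 1 ≤ n := by omega
          rw [hm1, Iw_Xn_nsub1 h hmonic hdeg horth n hn1]
          ring
        · have t1 : Iw (X * h n * h m) = 0 := by
            rw [show (X : Polynomial ℝ) * h n * h m = h n * (X * h m) by ring]
            apply horth_poly h hmonic hdeg horth
            have hXm : (X : Polynomial ℝ) * h m ≠ 0 := mul_ne_zero X_ne_zero (hmonic m).ne_zero
            rw [← Polynomial.natDegree_lt_iff_degree_lt hXm,
              Polynomial.natDegree_mul X_ne_zero (hmonic m).ne_zero,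
              Polynomial.natDegree_X, hdeg]
            omega
          have t2 : Iw (h (n - 1) * h m) = 0 := horth (n - 1) m (by omega)
          rw [t1, t2]; ring
    exact span_orth h hmonic hdeg r (n + 1) hq r.natDegree r le_rfl hdr
  rw [hr, sub_sub, sub_eq_zero] at hs
  exact hs

end Herm

end HermAux

/-- The staircase nilpotent matrix `A = ∑ a_{2j-1} E_{2j-1,2j} + ∑ a_{2j} E_{2j+1,2j}`
(1-based indices, here realized with 0-based `Fin N` indices). -/
def nilA (N : ℕ) (a : ℕ → ℝ) : Matrix (Fin N) (Fin N) ℝ :=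
  Matrix.of fun i k =>
    if k.val % 2 = 1 ∧ i.val + 1 = k.val then a k.val
    else if k.val % 2 = 1 ∧ i.val = k.val + 1 then a i.val
    else 0

/-- The matrix orthogonal polynomials for the Hermite-type weight
`W(x) = (I+Ax) e^{−x²} (I+Ax)ᵀ`:
`Qₙ(x) = hₙ(x)I + A hₙ₊₁(x) − (n/2) Aᵀ hₙ₋₁(x) − hₙ(x) A x + (n/2) hₙ₋₁(x) AᵀA x`
(for `n = 0` the terms with factor `n` vanish). -/
def QHerN (N : ℕ) (a : ℕ → ℝ) (h : ℕ → Polynomial ℝ) (n : ℕ) (x : ℝ) :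
    Matrix (Fin N) (Fin N) ℝ :=
  (h n).eval x • (1 : Matrix (Fin N) (Fin N) ℝ)
  + (h (n + 1)).eval x • nilA N a
  - ((n : ℝ) / 2 * (h (n - 1)).eval x) • (nilA N a)ᵀ
  - (x * (h n).eval x) • nilA N a
  + ((n : ℝ) / 2 * (h (n - 1)).eval x * x) • ((nilA N a)ᵀ * nilA N a)

/-- The sequence `Qₙ` is the image of the scalar Hermite polynomials under the
first-order differential operator `𝒟₁ = ∂ ((AᵀA/2)x − (A+Aᵀ)/2) + I`:
`hₙ'(x)((AᵀA/2)x − (A+Aᵀ)/2) + hₙ(x)I = Qₙ(x)`, exhibiting the weight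
`W(x) = (I+Ax)e^{−x²}(I+Ax)ᵀ` as a Darboux transformation of the diagonal
Hermite weight `e^{−x²}I`. -/
theorem hermite_darboux
    (N : ℕ) (hN : 2 ≤ N)
    (a : ℕ → ℝ) (ha : ∀ k, 1 ≤ k → k ≤ N - 1 → a k ≠ 0)
    (h : ℕ → Polynomial ℝ)
    (hmonic : ∀ n, (h n).Monic) (hdeg : ∀ n, (h n).natDegree = n)
    (horth : ∀ n m : ℕ, n ≠ m →
      ∫ x : ℝ, (h n).eval x * (h m).eval x * Real.exp (-x ^ 2) = 0) :
    ∀ (n : ℕ) (x : ℝ),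
      ((Polynomial.derivative (h n)).eval x) •
          ((x / 2) • ((nilA N a)ᵀ * nilA N a)
            - (1 / 2 : ℝ) • (nilA N a + (nilA N a)ᵀ))
      + (h n).eval x • (1 : Matrix (Fin N) (Fin N) ℝ)
      = QHerN N a h n x := by
  have horth' : ∀ n m : ℕ, n ≠ m → HermAux.Iw (h n * h m) = 0 := by
    intro n m hnm
    have hint := horth n m hnm
    unfold HermAux.Iw
    simp only [Polynomial.eval_mul]
    exact hint
  intro n x
  have hder := HermAux.deriv_h h hmonic hdeg horth' n
  have hrec := HermAux.recur h hmonic hdeg horth' n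
  have hd : (Polynomial.derivative (h n)).eval x = (n : ℝ) * (h (n - 1)).eval x := by
    rw [hder]; simp
  have hx : (h (n + 1)).eval x = x * (h n).eval x - (n : ℝ) / 2 * (h (n - 1)).eval x := by
    have he := congrArg (Polynomial.eval x) hrec
    simp only [Polynomial.eval_mul, Polynomial.eval_add, Polynomial.eval_C,
      Polynomial.eval_X] at he
    linarith
  rw [QHerN, hd, hx]
  module

end
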